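/- The excess local variance of the COMA counterfactual baseline Q^{-i}(a^{-i}) over the optimal baseline is bounded: (Q^{-i}(a^{-i}) − b*)² · E[||g||²] ≤ D² · Var_{a^i ~ π_i}[A^i(a^{-i},a^i)] ≤ (ε_i · D)², where D = sup_{a^i} ||g(a^i)||, ε_i = sup_{a^i} |A^i(a^{-i},a^i)|, A^i = Q − Q^{-i}, Q^{-i}(a^{-i}) = E_{a^i ~ π_i}[Q(a^{-i},a^i)]. -/

import Mathlib

open Finset

/-- Variance of `f` under weights `w`: `E[f²] − (E[f])²`. -/
def varOf {α : Type*} [Fintype α] (w : α → ℝ) (f : α → ℝ) : ℝ :=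
  (∑ a, w a * f a ^ 2) - (∑ a, w a * f a) ^ 2

/-- The excess local variance of the COMA counterfactual baseline `Q^{-i}` over the
optimal baseline is bounded:
`(Q^{-i} − b*)²·E[‖g‖²] ≤ D²·Var[A^i] ≤ (ε_i D)²`. -/
theorem excess_variance_coma_baseline_bound
    {Ai : Type*} [Fintype Ai] [Nonempty Ai] {d : ℕ}
    (πi : Ai → ℝ) (h0 : ∀ x, 0 ≤ πi x) (h1 : ∑ x, πi x = 1)
    (g : Ai → Fin d → ℝ)
    (hpos : 0 < ∑ x, πi x * ∑ j, (g x j) ^ 2)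
    (D : ℝ) (hD0 : 0 ≤ D) (hD : ∀ x, ∑ j, (g x j) ^ 2 ≤ D ^ 2)
    (Qf : Ai → ℝ)
    (εi : ℝ) (hε : ∀ x, |Qf x - ∑ y, πi y * Qf y| ≤ εi) :
    ((∑ y, πi y * Qf y)
        - (∑ y, πi y * (Qf y * ∑ j, (g y j) ^ 2)) / (∑ y, πi y * ∑ j, (g y j) ^ 2)) ^ 2
        * (∑ x, πi x * ∑ j, (g x j) ^ 2)
      ≤ D ^ 2 * varOf πi (fun x => Qf x - ∑ y, πi y * Qf y)
    ∧ D ^ 2 * varOf πi (fun x => Qf x - ∑ y, πi y * Qf y) ≤ (εi * D) ^ 2 := by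
  set Qbar : ℝ := ∑ y, πi y * Qf y with hQbar
  set S : ℝ := ∑ x, πi x * ∑ j, (g x j) ^ 2 with hS
  set A : Ai → ℝ := fun x => Qf x - Qbar with hA
  have hSne : S ≠ 0 := ne_of_gt hpos
  have hmean : ∑ x, πi x * A x = 0 := by
    simp only [hA, mul_sub, Finset.sum_sub_distrib, ← Finset.sum_mul]
    rw [← hQbar, h1]; ring
  have hvar : varOf πi A = ∑ x, πi x * A x ^ 2 := by
    rw [varOf, hmean]; ring
  set T : ℝ := ∑ y, πi y * (A y * ∑ j, (g y j) ^ 2) with hT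
  have hnum : ∑ y, πi y * (Qf y * ∑ j, (g y j) ^ 2) = T + Qbar * S := by
    rw [hT, hS, Finset.mul_sum, ← Finset.sum_add_distrib]
    apply Finset.sum_congr rfl
    intro x _
    simp only [hA]; ring
  have hb : Qbar - (T + Qbar * S) / S = -T / S := by
    field_simp
    ring
  -- Cauchy-Schwarz
  have hCS : T ^ 2 ≤ (∑ x, πi x * A x ^ 2) * (∑ x, πi x * (∑ j, (g x j) ^ 2) ^ 2) := by
    have key := Finset.sum_mul_sq_le_sq_mul_sq Finset.univ
      (fun x => Real.sqrt (πi x) * A x)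
      (fun x => Real.sqrt (πi x) * (∑ j, (g x j) ^ 2))
    have e1 : ∀ x : Ai, (Real.sqrt (πi x) * A x) * (Real.sqrt (πi x) * (∑ j, (g x j) ^ 2))
        = πi x * (A x * ∑ j, (g x j) ^ 2) := by
      intro x
      have : Real.sqrt (πi x) * Real.sqrt (πi x) = πi x := Real.mul_self_sqrt (h0 x)
      calc (Real.sqrt (πi x) * A x) * (Real.sqrt (πi x) * (∑ j, (g x j) ^ 2))
          = (Real.sqrt (πi x) * Real.sqrt (πi x)) * (A x * ∑ j, (g x j) ^ 2) := by ring
        _ = πi x * (A x * ∑ j, (g x j) ^ 2) := by rw [this]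
    have e2 : ∀ x : Ai, (Real.sqrt (πi x) * A x) ^ 2 = πi x * A x ^ 2 := by
      intro x
      rw [mul_pow, Real.sq_sqrt (h0 x)]
    have e3 : ∀ x : Ai, (Real.sqrt (πi x) * (∑ j, (g x j) ^ 2)) ^ 2
        = πi x * (∑ j, (g x j) ^ 2) ^ 2 := by
      intro x
      rw [mul_pow, Real.sq_sqrt (h0 x)]
    simp only [e1, e2, e3] at key
    exact key
  have h4 : (∑ x, πi x * (∑ j, (g x j) ^ 2) ^ 2) ≤ D ^ 2 * S := by
    rw [hS, Finset.mul_sum]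
    apply Finset.sum_le_sum
    intro x _
    have hg0 : (0:ℝ) ≤ ∑ j, (g x j) ^ 2 := Finset.sum_nonneg fun j _ => sq_nonneg _
    have : (∑ j, (g x j) ^ 2) ^ 2 ≤ D ^ 2 * (∑ j, (g x j) ^ 2) := by
      rw [sq]
      exact mul_le_mul_of_nonneg_right (hD x) hg0
    calc πi x * (∑ j, (g x j) ^ 2) ^ 2 ≤ πi x * (D ^ 2 * (∑ j, (g x j) ^ 2)) :=
          mul_le_mul_of_nonneg_left this (h0 x)
      _ = D ^ 2 * (πi x * ∑ j, (g x j) ^ 2) := by ring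
  have hA2 : (0:ℝ) ≤ ∑ x, πi x * A x ^ 2 :=
    Finset.sum_nonneg fun x _ => mul_nonneg (h0 x) (sq_nonneg _)
  constructor
  · rw [hnum, hb, hvar]
    have : (-T / S) ^ 2 * S = T ^ 2 / S := by
      field_simp
    rw [this, div_le_iff₀ hpos]
    calc T ^ 2 ≤ (∑ x, πi x * A x ^ 2) * (∑ x, πi x * (∑ j, (g x j) ^ 2) ^ 2) := hCS
      _ ≤ (∑ x, πi x * A x ^ 2) * (D ^ 2 * S) := mul_le_mul_of_nonneg_left h4 hA2
      _ = D ^ 2 * (∑ x, πi x * A x ^ 2) * S := by ring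
  · rw [hvar]
    have hε0 : 0 ≤ εi := le_trans (abs_nonneg _) (hε Classical.ofNonempty)
    have : (∑ x, πi x * A x ^ 2) ≤ εi ^ 2 := by
      calc (∑ x, πi x * A x ^ 2) ≤ ∑ x, πi x * εi ^ 2 := by
            apply Finset.sum_le_sum
            intro x _
            apply mul_le_mul_of_nonneg_left _ (h0 x)
            have := hε x
            have h' : |A x| ≤ εi := this
            calc A x ^ 2 = |A x| ^ 2 := (sq_abs _).symm
              _ ≤ εi ^ 2 := by
                  apply pow_le_pow_left₀ (abs_nonneg _) h'
        _ = εi ^ 2 := by rw [← Finset.sum_mul, h1, one_mul]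
    calc D ^ 2 * (∑ x, πi x * A x ^ 2) ≤ D ^ 2 * εi ^ 2 :=
          mul_le_mul_of_nonneg_left this (sq_nonneg D)
      _ = (εi * D) ^ 2 := by ring
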